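/- (Fano-type bound with list-size control) Let M be uniform on M = M₁ × ⋯ × M_ℓ and let L(Y) ⊆ M be a random subset such that the complement of L(Y) has at most |M|/|M^i| elements, where |M^i| = |M₁|⋯|M_i|. Then H(M|Y) ≤ h(P(M ∈ L(Y) | Y)) + ln(|M|/|M^i|) + P(M ∈ L(Y)|Y) · ln|M^i|. -/

import Mathlib

open scoped BigOperators

noncomputable section

/-- The binary entropy function `h(s) = -s ln s - (1-s) ln(1-s)`. -/
def bent (s : ℝ) : ℝ := -(s * Real.log s) - (1 - s) * Real.log (1 - s)

open Real in
/-- Grouping bound: `∑_{m ∈ S} -p m log (p m) ≤ -q log q + q log |S|` where `q = ∑_{m∈S} p m`. -/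
lemma group_entropy_bound {α : Type*} (S : Finset α) (p : α → ℝ)
    (hp : ∀ m ∈ S, 0 ≤ p m) :
    ∑ m ∈ S, negMulLog (p m)
      ≤ negMulLog (∑ m ∈ S, p m) + (∑ m ∈ S, p m) * Real.log S.card := by
  rcases S.eq_empty_or_nonempty with h | h
  · simp [h]
  have hn : (0:ℝ) < S.card := by exact_mod_cast Finset.card_pos.mpr h
  have jensen := concaveOn_negMulLog.le_map_sum (t := S) (w := fun _ => (S.card : ℝ)⁻¹)
    (p := p) (fun _ _ => by positivity)
    (by simp; field_simp) (fun m hm => hp m hm)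
  simp only [smul_eq_mul, ← Finset.mul_sum] at jensen
  have hkey : negMulLog ((S.card : ℝ)⁻¹ * ∑ m ∈ S, p m)
      = (S.card : ℝ)⁻¹ * (negMulLog (∑ m ∈ S, p m) + (∑ m ∈ S, p m) * Real.log S.card) := by
    rw [mul_comm, negMulLog_mul]
    have : negMulLog ((S.card : ℝ)⁻¹) = (S.card : ℝ)⁻¹ * Real.log S.card := by
      simp [negMulLog, Real.log_inv]
      try ring
    rw [this]; ring
  rw [hkey] at jensen
  calc ∑ m ∈ S, negMulLog (p m)
      = (S.card : ℝ) * ((S.card : ℝ)⁻¹ * ∑ m ∈ S, negMulLog (p m)) := by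
        field_simp
    _ ≤ (S.card : ℝ) * ((S.card : ℝ)⁻¹ *
          (negMulLog (∑ m ∈ S, p m) + (∑ m ∈ S, p m) * Real.log S.card)) := by
        exact mul_le_mul_of_nonneg_left jensen hn.le
    _ = negMulLog (∑ m ∈ S, p m) + (∑ m ∈ S, p m) * Real.log S.card := by
        field_simp

/-- Fano-type bound with list-size control: for a (posterior) distribution `p` on a finite
product message set `M = M₁ × ⋯ × M_ℓ` and a list `L ⊆ M` whose complement has at most
`|M|/|M^i|` elements (`|M^i| = |M₁| ⋯ |M_i|`), the entropy satisfies
`H(p) ≤ h(p(L)) + ln(|M|/|M^i|) + p(L) ln |M^i|`. Applied pointwise in the observation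
`Y`, this gives the bound on the conditional entropy `H(M|Y)`. -/
theorem fano_with_list_size {ℓ : ℕ} {Mi : Fin ℓ → Type*}
    [∀ j, Fintype (Mi j)] [∀ j, DecidableEq (Mi j)]
    (p : ((j : Fin ℓ) → Mi j) → ℝ)
    (hp : (∀ m, 0 ≤ p m) ∧ ∑ m, p m = 1)
    (i : ℕ) (L : Finset ((j : Fin ℓ) → Mi j))
    (hL : (Lᶜ.card : ℝ) ≤ (Fintype.card ((j : Fin ℓ) → Mi j) : ℝ) /
        ∏ j ∈ Finset.univ.filter (fun j : Fin ℓ => (j : ℕ) < i), (Fintype.card (Mi j) : ℝ)) :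
    ∑ m, p m * Real.log (1 / p m)
      ≤ bent (∑ m ∈ L, p m)
        + Real.log ((Fintype.card ((j : Fin ℓ) → Mi j) : ℝ) /
            ∏ j ∈ Finset.univ.filter (fun j : Fin ℓ => (j : ℕ) < i), (Fintype.card (Mi j) : ℝ))
        + (∑ m ∈ L, p m) *
            Real.log (∏ j ∈ Finset.univ.filter (fun j : Fin ℓ => (j : ℕ) < i),
              (Fintype.card (Mi j) : ℝ)) := by
  classical
  obtain ⟨hp0, hp1⟩ := hp
  have hMne : Nonempty ((j : Fin ℓ) → Mi j) := by
    by_contra hne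
    rw [not_nonempty_iff] at hne
    rw [Finset.sum_of_isEmpty] at hp1
    norm_num at hp1
  have hMcard : (0:ℝ) < Fintype.card ((j : Fin ℓ) → Mi j) := by exact_mod_cast Fintype.card_pos
  have hfac : ∀ j : Fin ℓ, (1:ℝ) ≤ Fintype.card (Mi j) := by
    intro j
    have : Nonempty (Mi j) := ⟨(Classical.arbitrary ((j : Fin ℓ) → Mi j)) j⟩
    exact_mod_cast Fintype.card_pos
  set P : ℝ := ∏ j ∈ Finset.univ.filter (fun j : Fin ℓ => (j : ℕ) < i),
      (Fintype.card (Mi j) : ℝ) with hP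
  have hP1 : (1:ℝ) ≤ P := by
    rw [hP]
    calc (1:ℝ) = ∏ _j ∈ Finset.univ.filter (fun j : Fin ℓ => (j : ℕ) < i), (1:ℝ) := by simp
      _ ≤ _ := Finset.prod_le_prod (fun _ _ => zero_le_one) (fun j _ => hfac j)
  have hP0 : (0:ℝ) < P := lt_of_lt_of_le one_pos hP1
  set R : ℝ := (Fintype.card ((j : Fin ℓ) → Mi j) : ℝ) / P with hR
  have hMP : P ≤ (Fintype.card ((j : Fin ℓ) → Mi j) : ℝ) := by
    have hcard : (Fintype.card ((j : Fin ℓ) → Mi j) : ℝ)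
        = ∏ j : Fin ℓ, (Fintype.card (Mi j) : ℝ) := by
      rw [Fintype.card_pi]; push_cast; rfl
    rw [hcard, ← Finset.prod_filter_mul_prod_filter_not Finset.univ
      (fun j : Fin ℓ => (j : ℕ) < i)]
    nth_rewrite 1 [← mul_one P]
    rw [hP]
    refine mul_le_mul_of_nonneg_left ?_ (by rw [← hP]; exact hP0.le)
    calc (1:ℝ) = ∏ _j ∈ Finset.univ.filter (fun j : Fin ℓ => ¬ (j : ℕ) < i), (1:ℝ) := by simp
      _ ≤ _ := Finset.prod_le_prod (fun _ _ => zero_le_one) (fun j _ => hfac j)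
  have hR1 : (1:ℝ) ≤ R := (one_le_div hP0).mpr hMP
  have hRP : R * P = (Fintype.card ((j : Fin ℓ) → Mi j) : ℝ) := by
    rw [hR]; field_simp
  set q : ℝ := ∑ m ∈ L, p m with hq
  have hq0 : 0 ≤ q := Finset.sum_nonneg (fun m _ => hp0 m)
  have hq1 : q ≤ 1 := by
    rw [hq, ← hp1]
    exact Finset.sum_le_sum_of_subset_of_nonneg (Finset.subset_univ L)
      (fun m _ _ => hp0 m)
  have hqc : (∑ m ∈ Lᶜ, p m) = 1 - q := by
    have hsplit : q + ∑ m ∈ Lᶜ, p m = 1 := by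
      rw [hq, Finset.sum_add_sum_compl, hp1]
    linarith
  have hent : ∑ m, p m * Real.log (1 / p m) = ∑ m, Real.negMulLog (p m) := by
    refine Finset.sum_congr rfl (fun m _ => ?_)
    rw [one_div, Real.log_inv, Real.negMulLog]
    ring
  rw [hent, ← Finset.sum_add_sum_compl L (fun m => Real.negMulLog (p m))]
  have h1 := group_entropy_bound L p (fun m _ => hp0 m)
  have h2 := group_entropy_bound Lᶜ p (fun m _ => hp0 m)
  rw [hqc] at h2
  have hlogL : q * Real.log L.card ≤ q * (Real.log R + Real.log P) := by
    apply mul_le_mul_of_nonneg_left _ hq0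
    rw [← Real.log_mul (by linarith) (by linarith), hRP]
    rcases Nat.eq_zero_or_pos L.card with h | h
    · rw [h]
      refine (by simp : Real.log (0:ℕ) = 0).le.trans (Real.log_nonneg ?_)
      exact_mod_cast Nat.one_le_iff_ne_zero.mpr (Fintype.card_ne_zero (α := (j : Fin ℓ) → Mi j))
    · refine Real.log_le_log (by exact_mod_cast h) ?_
      exact_mod_cast L.card_le_univ.trans_eq Finset.card_univ
  have hlogLc : (1 - q) * Real.log Lᶜ.card ≤ (1 - q) * Real.log R := by
    apply mul_le_mul_of_nonneg_left _ (by linarith)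
    rcases Nat.eq_zero_or_pos Lᶜ.card with h | h
    · rw [h]
      simpa using Real.log_nonneg hR1
    · exact Real.log_le_log (by exact_mod_cast h) hL
  have hbent : bent q = Real.negMulLog q + Real.negMulLog (1 - q) := by
    simp [bent, Real.negMulLog]; ring
  calc (∑ m ∈ L, Real.negMulLog (p m)) + ∑ m ∈ Lᶜ, Real.negMulLog (p m)
      ≤ (Real.negMulLog q + q * (Real.log R + Real.log P))
        + (Real.negMulLog (1 - q) + (1 - q) * Real.log R) := by
        have := add_le_add h1 h2
        nlinarith [hlogL, hlogLc]
    _ = bent q + Real.log R + q * Real.log P := by rw [hbent]; ring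

end
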